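/- Upper bound on von Neumann entropy by log-determinant: Let n be a positive integer and ν_1, …, ν_n real numbers with ν_j ≥ 1 for all j, not all equal to 1, and set m = 2·Σ_{j=1}^n log ν_j. Then Σ_{j=1}^n h(ν_j) ≤ f_n(m). -/

import Mathlib

/-- The von Neumann entropy contribution of a single symplectic eigenvalue
`ν ≥ 1`: `h(ν) = ((ν+1)/2)·log((ν+1)/2) − ((ν−1)/2)·log((ν−1)/2)` (with
`h(1) = 0`). -/
noncomputable def hEnt (ν : ℝ) : ℝ :=
  ((ν + 1) / 2) * Real.log ((ν + 1) / 2) - ((ν - 1) / 2) * Real.log ((ν - 1) / 2)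

/-- The function `f_n(m)`: tight bound relating von Neumann entropy and
log-determinant of Gaussian states, with `coth t = cosh t / sinh t`. -/
noncomputable def f (n : ℕ) (m : ℝ) : ℝ :=
  ((n : ℝ) / 2) * (Real.log ((Real.exp (m / (n : ℝ)) - 1) / 4)
    + Real.exp (m / (2 * (n : ℝ))) *
        Real.log (Real.cosh (m / (4 * (n : ℝ))) / Real.sinh (m / (4 * (n : ℝ)))))

/- Auxiliary definitions for the concavity argument. -/

/-- `H t = hEnt (exp t)`. -/
noncomputable def Hfun (t : ℝ) : ℝ := hEnt (Real.exp t)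

/-- First derivative of `Hfun` (valid for `t > 0`). -/
noncomputable def H1 (t : ℝ) : ℝ :=
  (Real.exp t / 2) *
    (Real.log ((Real.exp t + 1) / 2) - Real.log ((Real.exp t - 1) / 2))

/-- Second derivative of `Hfun` (valid for `t > 0`). -/
noncomputable def H2 (t : ℝ) : ℝ :=
  (Real.exp t / 2) *
    (Real.log ((Real.exp t + 1) / 2) - Real.log ((Real.exp t - 1) / 2))
  + (Real.exp t / 2) *
    (Real.exp t / (Real.exp t + 1) - Real.exp t / (Real.exp t - 1))

lemma one_lt_exp_of_pos {t : ℝ} (ht : 0 < t) : 1 < Real.exp t := by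
  simpa using Real.exp_lt_exp.mpr ht

lemma hasDerivAt_Hfun {t : ℝ} (ht : 0 < t) : HasDerivAt Hfun (H1 t) t := by
  have hgt : 1 < Real.exp t := one_lt_exp_of_pos ht
  have he : HasDerivAt Real.exp (Real.exp t) t := Real.hasDerivAt_exp t
  have ha : HasDerivAt (fun u => (Real.exp u + 1) / 2) (Real.exp t / 2) t :=
    (he.add_const 1).div_const 2
  have hb : HasDerivAt (fun u => (Real.exp u - 1) / 2) (Real.exp t / 2) t :=
    (he.sub_const 1).div_const 2
  have ha0 : (0:ℝ) < (Real.exp t + 1) / 2 := by positivity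
  have hb0 : (0:ℝ) < (Real.exp t - 1) / 2 := by linarith
  have hla : HasDerivAt (fun u => Real.log ((Real.exp u + 1) / 2))
      ((Real.exp t / 2) / ((Real.exp t + 1) / 2)) t := ha.log (ne_of_gt ha0)
  have hlb : HasDerivAt (fun u => Real.log ((Real.exp u - 1) / 2))
      ((Real.exp t / 2) / ((Real.exp t - 1) / 2)) t := hb.log (ne_of_gt hb0)
  have h := (ha.mul hla).sub (hb.mul hlb)
  have hfun : Hfun = fun u =>
      ((Real.exp u + 1) / 2) * Real.log ((Real.exp u + 1) / 2)
      - ((Real.exp u - 1) / 2) * Real.log ((Real.exp u - 1) / 2) := by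
    funext u; simp [Hfun, hEnt]
  rw [hfun]
  refine h.congr_deriv ?_
  have h1 : Real.exp t + 1 ≠ 0 := by positivity
  have h2 : Real.exp t - 1 ≠ 0 := by linarith
  unfold H1
  field_simp
  ring

lemma hasDerivAt_H1 {t : ℝ} (ht : 0 < t) : HasDerivAt H1 (H2 t) t := by
  have hgt : 1 < Real.exp t := one_lt_exp_of_pos ht
  have he : HasDerivAt Real.exp (Real.exp t) t := Real.hasDerivAt_exp t
  have ha : HasDerivAt (fun u => (Real.exp u + 1) / 2) (Real.exp t / 2) t :=
    (he.add_const 1).div_const 2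
  have hb : HasDerivAt (fun u => (Real.exp u - 1) / 2) (Real.exp t / 2) t :=
    (he.sub_const 1).div_const 2
  have ha0 : (0:ℝ) < (Real.exp t + 1) / 2 := by positivity
  have hb0 : (0:ℝ) < (Real.exp t - 1) / 2 := by linarith
  have hla : HasDerivAt (fun u => Real.log ((Real.exp u + 1) / 2))
      ((Real.exp t / 2) / ((Real.exp t + 1) / 2)) t := ha.log (ne_of_gt ha0)
  have hlb : HasDerivAt (fun u => Real.log ((Real.exp u - 1) / 2))
      ((Real.exp t / 2) / ((Real.exp t - 1) / 2)) t := hb.log (ne_of_gt hb0)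
  have h := (he.div_const 2).mul (hla.sub hlb)
  have hfun : H1 = fun u => (Real.exp u / 2) *
      (Real.log ((Real.exp u + 1) / 2) - Real.log ((Real.exp u - 1) / 2)) := rfl
  rw [hfun]
  refine h.congr_deriv ?_
  have h1 : Real.exp t + 1 ≠ 0 := by positivity
  have h2 : Real.exp t - 1 ≠ 0 := by linarith
  unfold H2
  simp only [Pi.sub_apply]
  field_simp

lemma H2_nonpos {t : ℝ} (ht : 0 < t) : H2 t ≤ 0 := by
  have hgt : 1 < Real.exp t := one_lt_exp_of_pos ht
  set ν : ℝ := Real.exp t with hν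
  have h1 : (0:ℝ) < ν + 1 := by linarith
  have h2 : (0:ℝ) < ν - 1 := by linarith
  set u : ℝ := (ν + 1) / (ν - 1) with hu
  have hu1 : 1 < u := by
    rw [hu, lt_div_iff₀ h2]; linarith
  have hu0 : 0 < u := lt_trans one_pos hu1
  -- log u ≤ sinh (log u) = (u - u⁻¹)/2
  have hle : Real.log u ≤ (u - u⁻¹) / 2 := by
    have hxpos : 0 < Real.log u := Real.log_pos hu1
    have := (Real.self_lt_sinh_iff).mpr hxpos
    rw [Real.sinh_log hu0] at this
    linarith
  -- rewrite log u
  have hlogu : Real.log u = Real.log ((ν + 1) / 2) - Real.log ((ν - 1) / 2) := by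
    rw [hu, Real.log_div (by positivity) (ne_of_gt h2),
      Real.log_div (by positivity) two_ne_zero,
      Real.log_div (ne_of_gt h2) two_ne_zero]
    ring
  have hui : (u - u⁻¹) / 2 = ν / (ν - 1) - ν / (ν + 1) := by
    rw [hu]
    field_simp
    ring
  have hkey : Real.log ((ν + 1) / 2) - Real.log ((ν - 1) / 2)
      ≤ ν / (ν - 1) - ν / (ν + 1) := by
    rw [← hlogu, ← hui]; exact hle
  have hν2 : 0 ≤ ν / 2 := by positivity
  have : H2 t = (ν / 2) * ((Real.log ((ν + 1) / 2) - Real.log ((ν - 1) / 2))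
      - (ν / (ν - 1) - ν / (ν + 1))) := by
    simp only [H2, ← hν]; ring
  rw [this]
  apply mul_nonpos_of_nonneg_of_nonpos hν2
  linarith

lemma continuous_Hfun : Continuous Hfun := by
  have h := Real.continuous_mul_log
  have ha : Continuous fun t : ℝ => (Real.exp t + 1) / 2 := by continuity
  have hb : Continuous fun t : ℝ => (Real.exp t - 1) / 2 := by continuity
  have : Continuous fun t : ℝ =>
      ((Real.exp t + 1) / 2) * Real.log ((Real.exp t + 1) / 2)
      - ((Real.exp t - 1) / 2) * Real.log ((Real.exp t - 1) / 2) :=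
    (h.comp ha).sub (h.comp hb)
  exact this

lemma concaveOn_Hfun : ConcaveOn ℝ (Set.Ici (0:ℝ)) Hfun := by
  refine concaveOn_of_hasDerivWithinAt2_nonpos (convex_Ici 0)
    continuous_Hfun.continuousOn (f' := H1) (f'' := H2) ?_ ?_ ?_
  · intro x hx
    rw [interior_Ici] at hx
    exact (hasDerivAt_Hfun hx).hasDerivWithinAt
  · intro x hx
    rw [interior_Ici] at hx
    exact (hasDerivAt_H1 hx).hasDerivWithinAt
  · intro x hx
    rw [interior_Ici] at hx
    exact H2_nonpos hx

/-- The value of `f n` at `m = 2 n s` equals `n · hEnt (exp s)` for `s > 0`. -/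
lemma f_eq_n_hEnt (n : ℕ) (hn : 0 < n) {s : ℝ} (hs : 0 < s) :
    f n (2 * ((n : ℝ) * s)) = (n : ℝ) * hEnt (Real.exp s) := by
  have hn0 : (n : ℝ) ≠ 0 := Nat.cast_ne_zero.mpr hn.ne'
  have hgt : 1 < Real.exp s := one_lt_exp_of_pos hs
  have hq1 : 2 * ((n : ℝ) * s) / (n : ℝ) = 2 * s := by field_simp
  have hq2 : 2 * ((n : ℝ) * s) / (2 * (n : ℝ)) = s := by field_simp
  have hq3 : 2 * ((n : ℝ) * s) / (4 * (n : ℝ)) = s / 2 := by field_simp; ring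
  have hE : Real.exp (2 * s) = Real.exp s * Real.exp s := by
    rw [← Real.exp_add]; ring_nf
  have hEh : Real.exp s = Real.exp (s / 2) * Real.exp (s / 2) := by
    rw [← Real.exp_add]; ring_nf
  have h1 : (0:ℝ) < (Real.exp s + 1) / 2 := by positivity
  have h2 : (0:ℝ) < (Real.exp s - 1) / 2 := by linarith
  have hsinh : 0 < Real.sinh (s / 2) := Real.sinh_pos_iff.mpr (by linarith)
  have hgt2 : 1 < Real.exp (s / 2) := one_lt_exp_of_pos (by linarith)
  have hratio : Real.cosh (s / 2) / Real.sinh (s / 2)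
      = ((Real.exp s + 1) / 2) / ((Real.exp s - 1) / 2) := by
    rw [Real.cosh_eq, Real.sinh_eq, Real.exp_neg, hEh]
    have hE0 : Real.exp (s / 2) ≠ 0 := (Real.exp_pos _).ne'
    have hden : Real.exp (s / 2) * Real.exp (s / 2) - 1 ≠ 0 := by
      rw [← hEh]; linarith
    have hinv : (Real.exp (s / 2))⁻¹ < 1 := inv_lt_one_of_one_lt₀ hgt2
    have hden2 : Real.exp (s / 2) - (Real.exp (s / 2))⁻¹ ≠ 0 := by
      have : (Real.exp (s / 2))⁻¹ < Real.exp (s / 2) := lt_trans hinv hgt2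
      linarith
    field_simp
  have hlogprod : Real.log ((Real.exp (2 * s) - 1) / 4)
      = Real.log ((Real.exp s + 1) / 2) + Real.log ((Real.exp s - 1) / 2) := by
    have : (Real.exp (2 * s) - 1) / 4 = ((Real.exp s + 1) / 2) * ((Real.exp s - 1) / 2) := by
      rw [hE]; ring
    rw [this, Real.log_mul (ne_of_gt h1) (ne_of_gt h2)]
  have hlograt : Real.log (Real.cosh (s / 2) / Real.sinh (s / 2))
      = Real.log ((Real.exp s + 1) / 2) - Real.log ((Real.exp s - 1) / 2) := by
    rw [hratio, Real.log_div (ne_of_gt h1) (ne_of_gt h2)]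
  simp only [f, hq1, hq2, hq3, hlogprod, hlograt, hEnt]
  ring

/-- **Upper bound on the von Neumann entropy by the log-determinant.** For
symplectic eigenvalues `ν_j ≥ 1`, not all equal to `1`, with
`m = 2 ∑ j, log ν_j`, one has `∑ j, h(ν_j) ≤ f_n(m)`. -/
theorem vonNeumann_entropy_le_f_n (n : ℕ) (hn : 0 < n) (ν : Fin n → ℝ)
    (hν : ∀ j, 1 ≤ ν j) (hne : ∃ j, ν j ≠ 1) :
    ∑ j, hEnt (ν j) ≤ f n (2 * ∑ j, Real.log (ν j)) := by
  have hn0 : (n : ℝ) ≠ 0 := Nat.cast_ne_zero.mpr hn.ne'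
  have hnpos : (0:ℝ) < n := by positivity
  set S := ∑ j, Real.log (ν j) with hS
  have hlog_nonneg : ∀ j, 0 ≤ Real.log (ν j) := fun j => Real.log_nonneg (hν j)
  have hSpos : 0 < S := by
    obtain ⟨j, hj⟩ := hne
    have hj1 : 1 < ν j := lt_of_le_of_ne (hν j) (Ne.symm hj)
    exact Finset.sum_pos' (fun i _ => hlog_nonneg i)
      ⟨j, Finset.mem_univ j, Real.log_pos hj1⟩
  have hspos : 0 < S / n := by positivity
  -- Jensen
  have key := concaveOn_Hfun.le_map_sum (t := Finset.univ)
    (w := fun _ : Fin n => (n:ℝ)⁻¹) (p := fun j => Real.log (ν j))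
    (fun i _ => by positivity)
    (by simp [Finset.sum_const, Finset.card_univ]; field_simp)
    (fun i _ => hlog_nonneg i)
  simp only [smul_eq_mul] at key
  have hsum_p : ∑ j, (n:ℝ)⁻¹ * Real.log (ν j) = S / n := by
    rw [← Finset.mul_sum, ← hS]; field_simp
  rw [hsum_p] at key
  have hsum_H : ∑ j, hEnt (ν j) = ∑ j, Hfun (Real.log (ν j)) := by
    apply Finset.sum_congr rfl
    intro j _
    have : Real.exp (Real.log (ν j)) = ν j :=
      Real.exp_log (lt_of_lt_of_le one_pos (hν j))
    simp [Hfun, this]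
  have hmul : ∑ j, hEnt (ν j) = (n:ℝ) * ∑ j, (n:ℝ)⁻¹ * Hfun (Real.log (ν j)) := by
    rw [hsum_H, ← Finset.mul_sum, ← mul_assoc]
    field_simp
  have hle : ∑ j, hEnt (ν j) ≤ (n:ℝ) * Hfun (S / n) := by
    rw [hmul]
    exact mul_le_mul_of_nonneg_left key (le_of_lt hnpos)
  have hfin : (n:ℝ) * Hfun (S / n) = f n (2 * S) := by
    have := f_eq_n_hEnt n hn hspos
    rw [Hfun]
    have h2S : 2 * ((n:ℝ) * (S / n)) = 2 * S := by field_simp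
    rw [← h2S, this]
  rw [← hfin]
  exact hle
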